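/- arXiv:math/0205284 — 2 statements merged into one kernel-verified Lean document; each statement's English description precedes it below -/
import Mathlib

section
/- Fix a positive integer n and let q = e^{πi/n}, q^{-1/2} = e^{-πi/2n}. Let {e_k : k = 0,...,2n-1} be the standard orthonormal basis of ℂ^{2n}, with indices read modulo 2n. Define antilinear operators J₂ and Ĵ₂ on ℂ^{2n}⊗ℂ^{2n} by J₂(e_k⊗e_ℓ) = q^{kℓ} e_{-k}⊗e_{-ℓ} and Ĵ₂(e_k⊗e_ℓ) = (-1)^k (q^{-1/2})^{k²} e_{-k}⊗e_{k+ℓ}, extended antilinearly. Then J₂ and Ĵ₂ commute: J₂Ĵ₂ = Ĵ₂J₂. -/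
noncomputable section

/-! ### A realization of the Hilbert-space tensor product -/

/-- A realization of the Hilbert-space tensor product `G₀ ≅ E ⊗ F` of two complex
Hilbert spaces: a bilinear map `tmul` whose range spans a dense subspace and which
multiplies inner products. -/
structure HTensor (E F G₀ : Type*) [NormedAddCommGroup E] [InnerProductSpace ℂ E]
    [NormedAddCommGroup F] [InnerProductSpace ℂ F]
    [NormedAddCommGroup G₀] [InnerProductSpace ℂ G₀] where
  tmul : E →ₗ[ℂ] F →ₗ[ℂ] G₀
  inner_tmul : ∀ (x x' : E) (y y' : F),
    (inner ℂ (tmul x y) (tmul x' y') : ℂ) = (inner ℂ x x' : ℂ) * (inner ℂ y y' : ℂ)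
  dense_span : Dense (↑(Submodule.span ℂ (Set.range fun p : E × F => tmul p.1 p.2)) : Set G₀)

namespace HTensor

variable {E F G₀ : Type*} [NormedAddCommGroup E] [InnerProductSpace ℂ E]
  [NormedAddCommGroup F] [InnerProductSpace ℂ F]
  [NormedAddCommGroup G₀] [InnerProductSpace ℂ G₀]

theorem norm_tmul (τ : HTensor E F G₀) (x : E) (y : F) : ‖τ.tmul x y‖ = ‖x‖ * ‖y‖ := by
  have h := τ.inner_tmul x x y y
  rw [inner_self_eq_norm_sq_to_K, inner_self_eq_norm_sq_to_K, inner_self_eq_norm_sq_to_K] at h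
  have h2 : ‖τ.tmul x y‖ ^ 2 = (‖x‖ * ‖y‖) ^ 2 := by
    rw [mul_pow]
    exact_mod_cast h
  have h4 := congrArg Real.sqrt h2
  rwa [Real.sqrt_sq (norm_nonneg _),
    Real.sqrt_sq (mul_nonneg (norm_nonneg _) (norm_nonneg _))] at h4

/-- The continuous linear map `y ↦ x ⊗ y`. -/
def lmul (τ : HTensor E F G₀) (x : E) : F →L[ℂ] G₀ :=
  LinearMap.mkContinuous (τ.tmul x) ‖x‖ fun y => by rw [τ.norm_tmul]

/-- The continuous linear map `x ↦ x ⊗ y`. -/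
def rmul (τ : HTensor E F G₀) (y : F) : E →L[ℂ] G₀ :=
  LinearMap.mkContinuous (τ.tmul.flip y) ‖y‖ fun x => by
    simp only [LinearMap.flip_apply]
    rw [τ.norm_tmul, mul_comm]

/-- `T = A ⊗ B` as an operator on `G₀ ≅ E ⊗ F`. -/
def IsTensorOp (τ : HTensor E F G₀) (A : E →L[ℂ] E) (B : F →L[ℂ] F)
    (T : G₀ →L[ℂ] G₀) : Prop :=
  ∀ x y, T (τ.tmul x y) = τ.tmul (A x) (B y)

end HTensor

/-- `S` is the flip (tensor swap) unitary `Σ` on `H2 ≅ H ⊗ H`. -/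
def IsFlip {H H2 : Type*} [NormedAddCommGroup H] [InnerProductSpace ℂ H]
    [NormedAddCommGroup H2] [InnerProductSpace ℂ H2]
    (τ : HTensor H H H2) (S : H2 →L[ℂ] H2) : Prop :=
  ∀ x y, S (τ.tmul x y) = τ.tmul y x

/-! ### σ-weakly continuous functionals and the σ-weak topology -/

/-- A linear functional on `B(E)` is normal (σ-weakly continuous) when it is of the
form `x ↦ ∑ₙ ⟪x ξₙ, ηₙ⟫` with `∑ₙ ‖ξₙ‖ ‖ηₙ‖ < ∞`. -/
def IsNormalFunctional {E : Type*} [NormedAddCommGroup E] [InnerProductSpace ℂ E]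
    (ω : (E →L[ℂ] E) →ₗ[ℂ] ℂ) : Prop :=
  ∃ ξ η : ℕ → E, Summable (fun n => ‖ξ n‖ * ‖η n‖) ∧
    ∀ x : E →L[ℂ] E, HasSum (fun n => (inner ℂ (x (ξ n)) (η n) : ℂ)) (ω x)

/-- The σ-weak topology on `B(E)`: the topology induced by all normal functionals. -/
def sigmaWeak (E : Type*) [NormedAddCommGroup E] [InnerProductSpace ℂ E] :
    TopologicalSpace (E →L[ℂ] E) :=
  TopologicalSpace.induced
    (fun x => fun ω : {ω : (E →L[ℂ] E) →ₗ[ℂ] ℂ // IsNormalFunctional ω} => ω.1 x)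
    inferInstance

/-- σ-weak closure of a set of operators. -/
def sigmaWeakClosure {E : Type*} [NormedAddCommGroup E] [InnerProductSpace ℂ E]
    (A : Set (E →L[ℂ] E)) : Set (E →L[ℂ] E) :=
  @closure _ (sigmaWeak E) A

/-- σ-weak density of a set of operators. -/
def SigmaWeaklyDense {E : Type*} [NormedAddCommGroup E] [InnerProductSpace ℂ E]
    (A : Set (E →L[ℂ] E)) : Prop :=
  @Dense _ (sigmaWeak E) A

/-- The von Neumann algebra generated by a set of operators : the double commutant
of the ∗-closed set generated by it. -/
def vnGen {E : Type*} [NormedAddCommGroup E] [InnerProductSpace ℂ E] [CompleteSpace E]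
    (A : Set (E →L[ℂ] E)) : Set (E →L[ℂ] E) :=
  Set.centralizer (Set.centralizer (A ∪ star '' A))

/-! ### Slice maps -/

section Slices

variable {H H2 : Type*} [NormedAddCommGroup H] [InnerProductSpace ℂ H] [CompleteSpace H]
  [NormedAddCommGroup H2] [InnerProductSpace ℂ H2] [CompleteSpace H2]

/-- `s = (ι ⊗ ω)(W)` : the right slice of `W ∈ B(H ⊗ H)` against `ω`. -/
def IsRightSlice (τ : HTensor H H H2) (W : H2 →L[ℂ] H2)
    (ω : (H →L[ℂ] H) →ₗ[ℂ] ℂ) (s : H →L[ℂ] H) : Prop :=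
  ∀ x x' : H, (inner ℂ (s x) x' : ℂ) =
    ω ((ContinuousLinearMap.adjoint (τ.lmul x')).comp (W.comp (τ.lmul x)))

/-- `s = (ω ⊗ ι)(W)` : the left slice of `W ∈ B(H ⊗ H)` against `ω`. -/
def IsLeftSlice (τ : HTensor H H H2) (W : H2 →L[ℂ] H2)
    (ω : (H →L[ℂ] H) →ₗ[ℂ] ℂ) (s : H →L[ℂ] H) : Prop :=
  ∀ y y' : H, (inner ℂ (s y) y' : ℂ) =
    ω ((ContinuousLinearMap.adjoint (τ.rmul y')).comp (W.comp (τ.rmul y)))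

/-- `S(W) = {(ι ⊗ ω)(W) : ω ∈ B(H)_*}`. -/
def Sset (τ : HTensor H H H2) (W : H2 →L[ℂ] H2) : Set (H →L[ℂ] H) :=
  {s | ∃ ω, IsNormalFunctional ω ∧ IsRightSlice τ W ω s}

/-- `Ŝ(W) = {(ω ⊗ ι)(W) : ω ∈ B(H)_*}`. -/
def ShatSet (τ : HTensor H H H2) (W : H2 →L[ℂ] H2) : Set (H →L[ℂ] H) :=
  {s | ∃ ω, IsNormalFunctional ω ∧ IsLeftSlice τ W ω s}

end Slices

/-! ### The threefold tensor product and leg numbering -/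

/-- A realization of the threefold Hilbert tensor product `H3 ≅ H ⊗ H ⊗ H`. -/
structure HTensor3 (H H3 : Type*) [NormedAddCommGroup H] [InnerProductSpace ℂ H]
    [NormedAddCommGroup H3] [InnerProductSpace ℂ H3] where
  tmul3 : H →ₗ[ℂ] H →ₗ[ℂ] H →ₗ[ℂ] H3
  inner_tmul3 : ∀ x y z x' y' z',
    (inner ℂ (tmul3 x y z) (tmul3 x' y' z') : ℂ) =
      (inner ℂ x x' : ℂ) * (inner ℂ y y' : ℂ) * (inner ℂ z z' : ℂ)
  dense_span3 : Dense (↑(Submodule.span ℂ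
      (Set.range fun p : H × H × H => tmul3 p.1 p.2.1 p.2.2)) : Set H3)

section Legs

variable {H H2 H3 : Type*} [NormedAddCommGroup H] [InnerProductSpace ℂ H]
  [NormedAddCommGroup H2] [InnerProductSpace ℂ H2]
  [NormedAddCommGroup H3] [InnerProductSpace ℂ H3]

/-- `T = W₁₂ = W ⊗ 1`, characterized by matrix coefficients. -/
def Is12 (τ : HTensor H H H2) (τ3 : HTensor3 H H3)
    (W : H2 →L[ℂ] H2) (T : H3 →L[ℂ] H3) : Prop :=
  ∀ x y z x' y' z', (inner ℂ (T (τ3.tmul3 x y z)) (τ3.tmul3 x' y' z') : ℂ) =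
    (inner ℂ (W (τ.tmul x y)) (τ.tmul x' y') : ℂ) * (inner ℂ z z' : ℂ)

/-- `T = W₁₃ = (1 ⊗ Σ)(W ⊗ 1)(1 ⊗ Σ)`, characterized by matrix coefficients. -/
def Is13 (τ : HTensor H H H2) (τ3 : HTensor3 H H3)
    (W : H2 →L[ℂ] H2) (T : H3 →L[ℂ] H3) : Prop :=
  ∀ x y z x' y' z', (inner ℂ (T (τ3.tmul3 x y z)) (τ3.tmul3 x' y' z') : ℂ) =
    (inner ℂ (W (τ.tmul x z)) (τ.tmul x' z') : ℂ) * (inner ℂ y y' : ℂ)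

/-- `T = W₂₃ = 1 ⊗ W`, characterized by matrix coefficients. -/
def Is23 (τ : HTensor H H H2) (τ3 : HTensor3 H H3)
    (W : H2 →L[ℂ] H2) (T : H3 →L[ℂ] H3) : Prop :=
  ∀ x y z x' y' z', (inner ℂ (T (τ3.tmul3 x y z)) (τ3.tmul3 x' y' z') : ℂ) =
    (inner ℂ x x' : ℂ) * (inner ℂ (W (τ.tmul y z)) (τ.tmul y' z') : ℂ)

/-- `T = 1 ⊗ 1 ⊗ m` on `H3`. -/
def Is3 (τ3 : HTensor3 H H3) (m : H →L[ℂ] H) (T : H3 →L[ℂ] H3) : Prop :=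
  ∀ x y z, T (τ3.tmul3 x y z) = τ3.tmul3 x y (m z)

/-- The pentagon equation `W₁₂ W₁₃ W₂₃ = W₂₃ W₁₂`. -/
def Pentagon (τ : HTensor H H H2) (τ3 : HTensor3 H H3) (W : H2 →L[ℂ] H2) : Prop :=
  ∀ W12 W13 W23 : H3 →L[ℂ] H3, Is12 τ τ3 W W12 → Is13 τ τ3 W W13 → Is23 τ τ3 W W23 →
    W12 * W13 * W23 = W23 * W12

end Legs

/-- A multiplicative unitary : a unitary on `H2 ≅ H ⊗ H` satisfying the pentagon equation. -/
def IsMultiplicativeUnitary {H H2 H3 : Type*}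
    [NormedAddCommGroup H] [InnerProductSpace ℂ H]
    [NormedAddCommGroup H2] [InnerProductSpace ℂ H2] [CompleteSpace H2]
    [NormedAddCommGroup H3] [InnerProductSpace ℂ H3]
    (τ : HTensor H H H2) (τ3 : HTensor3 H H3) (W : H2 →L[ℂ] H2) : Prop :=
  W ∈ unitary (H2 →L[ℂ] H2) ∧ Pentagon τ τ3 W

/-- The set `S Ŝ* = {s ŝ* : s ∈ S, ŝ ∈ Ŝ}`. -/
def SShatStar {H H2 : Type*} [NormedAddCommGroup H] [InnerProductSpace ℂ H] [CompleteSpace H]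
    [NormedAddCommGroup H2] [InnerProductSpace ℂ H2] [CompleteSpace H2]
    (τ : HTensor H H H2) (W : H2 →L[ℂ] H2) : Set (H →L[ℂ] H) :=
  {x : H →L[ℂ] H | ∃ s ∈ Sset τ W, ∃ t ∈ ShatSet τ W, x = s * star t}

/-- `W` is trim : the linear span of `S Ŝ*` is σ-weakly dense in `B(H)`. -/
def IsTrim {H H2 : Type*} [NormedAddCommGroup H] [InnerProductSpace ℂ H] [CompleteSpace H]
    [NormedAddCommGroup H2] [InnerProductSpace ℂ H2] [CompleteSpace H2]
    (τ : HTensor H H H2) (W : H2 →L[ℂ] H2) : Prop :=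
  SigmaWeaklyDense ((Submodule.span ℂ (SShatStar τ W) :
      Submodule ℂ (H →L[ℂ] H)) : Set (H →L[ℂ] H))

/-- A quantum group frame `(W, J, Ĵ)` (definition 3.4 of the paper). -/
structure IsQuantumGroupFrame {H H2 H3 : Type*}
    [NormedAddCommGroup H] [InnerProductSpace ℂ H] [CompleteSpace H]
    [NormedAddCommGroup H2] [InnerProductSpace ℂ H2] [CompleteSpace H2]
    [NormedAddCommGroup H3] [InnerProductSpace ℂ H3]
    (τ : HTensor H H H2) (τ3 : HTensor3 H H3) (W : H2 →L[ℂ] H2)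
    (J Jhat : H →SL[starRingEnd ℂ] H) : Prop where
  unitary_mem : W ∈ unitary (H2 →L[ℂ] H2)
  pentagon : Pentagon τ τ3 W
  trim : IsTrim τ W
  J_star : ∀ ξ η : H, (inner ℂ (J ξ) η : ℂ) = (inner ℂ (J η) ξ : ℂ)
  J_sq : ∀ ξ : H, J (J ξ) = ξ
  Jhat_star : ∀ ξ η : H, (inner ℂ (Jhat ξ) η : ℂ) = (inner ℂ (Jhat η) ξ : ℂ)
  Jhat_sq : ∀ ξ : H, Jhat (Jhat ξ) = ξ
  W_star : ∀ K : H2 →SL[starRingEnd ℂ] H2,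
    (∀ x y, K (τ.tmul x y) = τ.tmul (Jhat x) (J y)) →
    ∀ u : H2, (star W) u = K (W (K u))
  JMJ : ∀ x m : H →L[ℂ] H, m ∈ vnGen (Sset τ W) → (∀ ξ, x ξ = J (m (J ξ))) →
    x ∈ Set.centralizer (vnGen (Sset τ W))
  JhatMhatJhat : ∀ x m : H →L[ℂ] H, m ∈ vnGen (ShatSet τ W) → (∀ ξ, x ξ = Jhat (m (Jhat ξ))) →
    x ∈ Set.centralizer (vnGen (ShatSet τ W))

end


lemma zpow_cong_aux {ζ : ℂ} (hζ : ζ ≠ 0) {M : ℤ} (h1 : ζ ^ M = 1) {e1 e2 : ℤ}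
    (h : M ∣ e1 - e2) : ζ ^ e1 = ζ ^ e2 := by
  obtain ⟨m, hm⟩ := h
  have : e1 = e2 + M * m := by linarith
  rw [this, zpow_add₀ hζ, zpow_mul, h1, one_zpow, mul_one]

/-- with `q = e^{πi/n}` and `q^{-1/2} = e^{-πi/2n}`, the antilinear operators
`J₂(e_k ⊗ e_ℓ) = q^{kℓ} e_{-k} ⊗ e_{-ℓ}` and
`Ĵ₂(e_k ⊗ e_ℓ) = (-1)^k (q^{-1/2})^{k²} e_{-k} ⊗ e_{k+ℓ}` on `ℂ^{2n} ⊗ ℂ^{2n}`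
(indices mod `2n`) commute: `J₂ Ĵ₂ = Ĵ₂ J₂`. -/
theorem statement_17 (n : ℕ) (hn : 0 < n) [NeZero (2 * n)]
    (J2 Jhat2 : EuclideanSpace ℂ (ZMod (2 * n) × ZMod (2 * n)) →SL[starRingEnd ℂ]
      EuclideanSpace ℂ (ZMod (2 * n) × ZMod (2 * n)))
    (hJ2 : ∀ k l : ZMod (2 * n),
      J2 (EuclideanSpace.single (k, l) (1 : ℂ)) =
        Complex.exp (Real.pi * Complex.I / (n : ℂ)) ^ (k.val * l.val) •
          EuclideanSpace.single (-k, -l) (1 : ℂ))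
    (hJhat2 : ∀ k l : ZMod (2 * n),
      Jhat2 (EuclideanSpace.single (k, l) (1 : ℂ)) =
        ((-1 : ℂ) ^ k.val *
            Complex.exp (-(Real.pi * Complex.I) / (2 * (n : ℂ))) ^ (k.val ^ 2)) •
          EuclideanSpace.single (-k, k + l) (1 : ℂ)) :
    ∀ v : EuclideanSpace ℂ (ZMod (2 * n) × ZMod (2 * n)),
      J2 (Jhat2 v) = Jhat2 (J2 v) := by
  have hnC : (n : ℂ) ≠ 0 := Nat.cast_ne_zero.mpr hn.ne'
  -- the scalar identity
  have key : ∀ k l : ZMod (2 * n),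
      (starRingEnd ℂ) ((-1 : ℂ) ^ k.val *
          Complex.exp (-(Real.pi * Complex.I) / (2 * (n : ℂ))) ^ (k.val ^ 2)) *
        Complex.exp (Real.pi * Complex.I / (n : ℂ)) ^ ((-k).val * (k + l).val)
      = (starRingEnd ℂ) (Complex.exp (Real.pi * Complex.I / (n : ℂ)) ^ (k.val * l.val)) *
        ((-1 : ℂ) ^ (-k).val *
          Complex.exp (-(Real.pi * Complex.I) / (2 * (n : ℂ))) ^ ((-k).val ^ 2)) := by
    intro k l
    set ζ : ℂ := Complex.exp (Real.pi * Complex.I / (2 * (n : ℂ))) with hζdef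
    have hζ : ζ ≠ 0 := Complex.exp_ne_zero _
    have hconjarg : (starRingEnd ℂ) (Real.pi * Complex.I / (2 * (n : ℂ)))
        = -(Real.pi * Complex.I / (2 * (n : ℂ))) := by
      simp [map_div₀, Complex.conj_I, map_ofNat]; ring
    have hr : Complex.exp (-(Real.pi * Complex.I) / (2 * (n : ℂ))) = ζ ^ (-1 : ℤ) := by
      rw [zpow_neg_one, neg_div, ← Complex.exp_neg]
    have hconjr : (starRingEnd ℂ)
        (Complex.exp (-(Real.pi * Complex.I) / (2 * (n : ℂ)))) = ζ ^ (1 : ℤ) := by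
      rw [zpow_one, ← Complex.exp_conj, hζdef]
      congr 1
      rw [neg_div, map_neg, hconjarg, neg_neg]
    have hq : Complex.exp (Real.pi * Complex.I / (n : ℂ)) = ζ ^ (2 : ℤ) := by
      rw [hζdef, ← Complex.exp_int_mul]
      congr 1
      field_simp
      ring
    have hconjq : (starRingEnd ℂ)
        (Complex.exp (Real.pi * Complex.I / (n : ℂ))) = ζ ^ (-2 : ℤ) := by
      rw [hq, hζdef, map_zpow₀, ← Complex.exp_conj, hconjarg, Complex.exp_neg,
        ← zpow_neg_one, ← zpow_mul]
      norm_num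
    have hneg : (-1 : ℂ) = ζ ^ ((2 * n : ℕ) : ℤ) := by
      rw [hζdef, ← Complex.exp_int_mul, ← Complex.exp_pi_mul_I]
      congr 1
      push_cast
      field_simp
    have h4n : ζ ^ ((2 * (2 * n) : ℕ) : ℤ) = 1 := by
      rw [hζdef, ← Complex.exp_int_mul, ← Complex.exp_two_pi_mul_I]
      congr 1
      push_cast
      field_simp
    have hz : ∀ (m : ℤ) (j : ℕ), ((ζ ^ m) ^ j : ℂ) = ζ ^ (m * j) := fun m j => by
      rw [← zpow_natCast (ζ ^ m), ← zpow_mul]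
    simp only [map_mul, map_pow, map_neg, map_one]
    rw [hconjr, hconjq, hq, hneg, hr, hz, hz, hz, hz, hz, hz,
      ← zpow_add₀ hζ, ← zpow_add₀ hζ, ← zpow_add₀ hζ, ← zpow_add₀ hζ]
    refine zpow_cong_aux hζ h4n ?_
    have hs : ((2 * n : ℕ) : ℤ) ∣ ((k.val : ℤ) + ((-k).val : ℤ)) := by
      rw [← ZMod.intCast_zmod_eq_zero_iff_dvd]
      push_cast
      simp [ZMod.natCast_val, ZMod.cast_id]
    have ht : ((2 * n : ℕ) : ℤ) ∣ ((k.val : ℤ) + (l.val : ℤ) - ((k + l).val : ℤ)) := by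
      rw [← ZMod.intCast_zmod_eq_zero_iff_dvd]
      push_cast
      simp [ZMod.natCast_val, ZMod.cast_id]
    obtain ⟨s, hs⟩ := hs
    obtain ⟨t, ht⟩ := ht
    have ha' : ((-k).val : ℤ) = 2 * n * s - k.val := by push_cast at hs ⊢; linarith
    have hc : ((k + l).val : ℤ) = k.val + l.val - 2 * n * t := by push_cast at ht ⊢; linarith
    push_cast
    rw [ha', hc]
    exact ⟨(k.val : ℤ) + s * l.val + k.val * t + n * (s * s - s - 2 * s * t), by push_cast; ring⟩
  -- the statement on basis vectors
  have hbasis : ∀ k l : ZMod (2 * n),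
      J2 (Jhat2 (EuclideanSpace.single (k, l) (1 : ℂ))) =
        Jhat2 (J2 (EuclideanSpace.single (k, l) (1 : ℂ))) := by
    intro k l
    rw [hJhat2 k l, hJ2 k l, map_smulₛₗ, map_smulₛₗ, hJ2 (-k) (k + l), hJhat2 (-k) (-l),
      smul_smul, smul_smul, neg_neg, neg_add, key k l]
  -- extend by (anti)linearity
  intro v
  have hv : v = ∑ p : ZMod (2 * n) × ZMod (2 * n), v p • EuclideanSpace.single p (1 : ℂ) := by
    have := (EuclideanSpace.basisFun (ZMod (2 * n) × ZMod (2 * n)) ℂ).toBasis.sum_repr v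
    simpa [EuclideanSpace.basisFun_apply, EuclideanSpace.basisFun_repr] using this.symm
  rw [hv, map_sum, map_sum, map_sum, map_sum]
  refine Finset.sum_congr rfl fun p _ => ?_
  rw [map_smulₛₗ, map_smulₛₗ, map_smulₛₗ, map_smulₛₗ, hbasis p.1 p.2]
end

section
/- Let G be a locally compact group with left Haar measure, K ⊆ G a compact subset, and {E₁, ..., Eₙ} a finite open cover of K. Then there exist functions h₁, ..., hₙ : G → [0,∞) such that: (1) each hᵢ is continuous with compact support contained in Eᵢ; (2) 0 ≤ Σᵢ hᵢ ≤ 1 on G; (3) Σᵢ hᵢ(p) = 1 for every p ∈ K; and (4) each hᵢ is of the form hᵢ(p) = ∫ g(p⁻¹q) fᵢ(q) dq for nonnegative compactly supported continuous functions g, fᵢ on G (so each hᵢ is a coefficient function of the left regular representation, i.e. hᵢ(p) = ⟨λ_{p⁻¹} fᵢ, g⟩ with fᵢ, g ∈ L²(G), and hence hᵢ belongs to the Fourier algebra A(G)). -/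
open MeasureTheory Topology Pointwise

/-- a compact subset `K` of a locally compact group `G` with a finite open
cover `E₁, …, Eₙ` admits a subordinate partition of unity `h₁, …, hₙ` consisting of
convolution coefficient functions `hᵢ(p) = ∫ g(p⁻¹q) fᵢ(q) dq` (so each `hᵢ` lies in
`K(G) ∩ A(G)`). -/
theorem statement_18 {G : Type*} [Group G] [TopologicalSpace G] [IsTopologicalGroup G]
    [LocallyCompactSpace G] [MeasurableSpace G] [BorelSpace G]
    (μ : Measure G) [μ.IsHaarMeasure]
    (K : Set G) (hK : IsCompact K) (n : ℕ) (E : Fin n → Set G)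
    (hEopen : ∀ i, IsOpen (E i)) (hcover : K ⊆ ⋃ i, E i) :
    ∃ h : Fin n → G → ℝ,
      (∀ i, Continuous (h i) ∧ HasCompactSupport (h i) ∧
        tsupport (h i) ⊆ E i ∧ ∀ p, 0 ≤ h i p) ∧
      (∀ p : G, 0 ≤ ∑ i, h i p ∧ ∑ i, h i p ≤ 1) ∧
      (∀ p ∈ K, ∑ i, h i p = 1) ∧
      ∃ g : G → ℝ, ∃ f : Fin n → G → ℝ,
        Continuous g ∧ HasCompactSupport g ∧ (∀ q, 0 ≤ g q) ∧
        (∀ i, Continuous (f i) ∧ HasCompactSupport (f i) ∧ ∀ q, 0 ≤ f i q) ∧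
        ∀ i p, h i p = ∫ q, g (p⁻¹ * q) * f i q ∂μ := by

  classical
  rcases Nat.eq_zero_or_pos n with hn | hn
  · -- trivial case: `n = 0`, so `K = ∅`
    subst hn
    refine ⟨fun i _ => 0, fun i => i.elim0, ?_, ?_, 0, fun i => i.elim0, continuous_const,
      HasCompactSupport.zero, fun q => le_refl 0, fun i => i.elim0, fun i => i.elim0⟩
    · intro p; simp
    · intro p hp
      exact absurd (hcover hp) (by simp)
  have : Nonempty (Fin n) := ⟨⟨0, hn⟩⟩
  -- Step 1: shrink the cover to compact sets `C i ⊆ E i` with `K ⊆ ⋃ i, interior (C i)`.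
  obtain ⟨C, hCc, hCE, hKC⟩ : ∃ C : Fin n → Set G, (∀ i, IsCompact (C i)) ∧
      (∀ i, C i ⊆ E i) ∧ K ⊆ ⋃ i, interior (C i) := by
    have hptwise : ∀ x, x ∈ K → ∃ (i : Fin n) (L : Set G),
        IsCompact L ∧ x ∈ interior L ∧ L ⊆ E i := by
      intro x hxK
      obtain ⟨i, hi⟩ := Set.mem_iUnion.1 (hcover hxK)
      obtain ⟨L, hL1, hL2, hL3⟩ := exists_compact_subset (hEopen i) hi
      exact ⟨i, L, hL1, hL2, hL3⟩
    choose! idx L hLc hxL hLE using hptwise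
    have hKsub : K ⊆ ⋃ x ∈ K, interior (L x) := fun x hx =>
      Set.mem_biUnion hx (hxL x hx)
    obtain ⟨t, htK, htfin, ht⟩ :=
      hK.elim_finite_subcover_image (fun x _ => isOpen_interior) hKsub
    refine ⟨fun i => ⋃ x ∈ {x ∈ t | idx x = i}, L x, ?_, ?_, ?_⟩
    · intro i
      apply Set.Finite.isCompact_biUnion (htfin.subset (Set.sep_subset _ _))
      intro x hx
      exact hLc x (htK hx.1)
    · intro i y hy
      obtain ⟨x, hx, hyx⟩ := Set.mem_iUnion₂.mp hy
      rcases hx with ⟨hxt, rfl⟩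
      exact hLE x (htK hxt) hyx
    · intro x hx
      obtain ⟨y, hyt, hxy⟩ := Set.mem_iUnion₂.mp (ht hx)
      refine Set.mem_iUnion.2 ⟨idx y, ?_⟩
      have hLsub : L y ⊆ ⋃ z ∈ {z ∈ t | idx z = idx y}, L z := fun w hw =>
        Set.mem_biUnion ⟨hyt, rfl⟩ hw
      exact interior_mono hLsub hxy
  -- Step 2: Urysohn functions `φ i` with `φ i = 1` on `C i`, `support (φ i) ⊆ m i ⊆ E i`.
  have step2 : ∀ i : Fin n, ∃ (m : Set G) (φ : C(G, ℝ)), IsCompact m ∧ m ⊆ E i ∧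
      Set.EqOn φ 1 (C i) ∧ Function.support φ ⊆ m ∧ HasCompactSupport φ ∧
      ∀ x, φ x ∈ Set.Icc (0 : ℝ) 1 := by
    intro i
    obtain ⟨m, hm_comp, hm_closed, hCm, hmE⟩ :=
      exists_compact_closed_between (hCc i) (hEopen i) (hCE i)
    obtain ⟨φ, hφ1, hφ0, hφcs, hφr⟩ :=
      exists_continuous_one_zero_of_isCompact (hCc i) isOpen_interior.isClosed_compl
        (Set.disjoint_compl_right_iff_subset.mpr hCm)
    refine ⟨m, φ, hm_comp, hmE, hφ1, ?_, hφcs, hφr⟩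
    intro x hx
    by_contra hxm
    exact hx (hφ0 fun h => hxm (interior_subset h))
  choose m φ hm_comp hmE hφ1 hφsupp hφcs hφr using step2
  -- Step 3: normalized partition functions `k i`.
  set denom : G → ℝ := fun x => max 1 (∑ j, φ j x) with hdenom_def
  have hdenom_pos : ∀ x, (0 : ℝ) < denom x := fun x => lt_of_lt_of_le one_pos (le_max_left _ _)
  have hdenom_ne : ∀ x, denom x ≠ 0 := fun x => (hdenom_pos x).ne'
  have hdenom_cont : Continuous denom :=
    continuous_const.max (continuous_finset_sum _ fun j _ => (φ j).continuous)
  set k : Fin n → G → ℝ := fun i x => φ i x / denom x with hk_def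
  have hk_cont : ∀ i, Continuous (k i) := fun i =>
    ((φ i).continuous).div hdenom_cont hdenom_ne
  have hk_nonneg : ∀ i x, 0 ≤ k i x := fun i x =>
    div_nonneg (hφr i x).1 (hdenom_pos x).le
  have hφ_le_sum : ∀ i x, φ i x ≤ ∑ j, φ j x := fun i x =>
    Finset.single_le_sum (fun j _ => (hφr j x).1) (Finset.mem_univ i)
  have hk_le_one : ∀ i x, k i x ≤ 1 := fun i x =>
    (div_le_one (hdenom_pos x)).2 ((hφ_le_sum i x).trans (le_max_right _ _))
  have hk_supp : ∀ i, Function.support (k i) ⊆ m i := by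
    intro i x hx
    apply hφsupp i
    intro h0
    exact hx (by simp [hk_def, h0])
  have hksum_le_one : ∀ x, ∑ i, k i x ≤ 1 := by
    intro x
    simp only [hk_def, ← Finset.sum_div]
    exact (div_le_one (hdenom_pos x)).2 (le_max_right _ _)
  have hksum_nonneg : ∀ x, (0 : ℝ) ≤ ∑ i, k i x := fun x =>
    Finset.sum_nonneg fun i _ => hk_nonneg i x
  set O : Set G := ⋃ i, interior (C i) with hO_def
  have hO_open : IsOpen O := isOpen_iUnion fun i => isOpen_interior
  have hksum_one : ∀ x ∈ O, ∑ i, k i x = 1 := by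
    intro x hx
    obtain ⟨i, hi⟩ := Set.mem_iUnion.1 hx
    have hφi : φ i x = 1 := hφ1 i (interior_subset hi)
    have hsum_ge : (1 : ℝ) ≤ ∑ j, φ j x := hφi ▸ hφ_le_sum i x
    have hd : denom x = ∑ j, φ j x := max_eq_right hsum_ge
    simp only [hk_def, ← Finset.sum_div, hd]
    exact div_self (by linarith)
  -- Step 4: choose a neighborhood `W` of 1.
  obtain ⟨VK, hVK_mem, hVK⟩ := compact_open_separated_mul_right hK hO_open hKC
  have step4 : ∀ i : Fin n, ∃ V ∈ 𝓝 (1 : G), m i * V ⊆ E i := fun i =>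
    compact_open_separated_mul_right (hm_comp i) (hEopen i) (hmE i)
  choose V hV_mem hV using step4
  set W : Set G := VK ∩ ⋂ i, (V i)⁻¹ with hW_def
  have hW_mem : W ∈ 𝓝 (1 : G) :=
    Filter.inter_mem hVK_mem (Filter.iInter_mem.2 fun i => inv_mem_nhds_one G (hV_mem i))
  -- Step 5: the bump function `g`.
  have h1W : (1 : G) ∈ interior W := mem_interior_iff_mem_nhds.2 hW_mem
  obtain ⟨m0, hm0_comp, hm0_closed, h1m0, hm0W⟩ :=
    exists_compact_closed_between (isCompact_singleton (x := (1 : G)))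
      isOpen_interior (Set.singleton_subset_iff.2 h1W)
  obtain ⟨g0, hg01, hg00, hg0cs, hg0r⟩ :=
    exists_continuous_one_zero_of_isCompact (isCompact_singleton (x := (1 : G)))
      isOpen_interior.isClosed_compl
      (Set.disjoint_compl_right_iff_subset.mpr h1m0)
  have hg0_supp : Function.support g0 ⊆ m0 := by
    intro x hx
    by_contra hxm
    exact hx (hg00 fun h => hxm (interior_subset h))
  have hg0_suppW : Function.support g0 ⊆ W :=
    hg0_supp.trans (hm0W.trans interior_subset)
  have hg0_nonneg : ∀ x, (0 : ℝ) ≤ g0 x := fun x => (hg0r x).1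
  have hg0_int : MeasureTheory.Integrable g0 μ :=
    g0.continuous.integrable_of_hasCompactSupport hg0cs
  have hg0_pos : (0 : ℝ) < ∫ x, g0 x ∂μ := by
    rw [MeasureTheory.integral_pos_iff_support_of_nonneg hg0_nonneg hg0_int]
    exact g0.continuous.isOpen_support.measure_pos μ
      ⟨1, by simp [Function.mem_support, hg01 rfl]⟩
  set c : ℝ := ∫ x, g0 x ∂μ with hc_def
  set g : G → ℝ := fun q => g0 q / c with hg_def
  have hg_cont : Continuous g := g0.continuous.div_const c
  have hg_nonneg : ∀ q, 0 ≤ g q := fun q => div_nonneg (hg0_nonneg q) hg0_pos.le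
  have hg_supp : Function.support g ⊆ Function.support g0 := by
    intro x hx
    simp only [hg_def, Function.mem_support] at hx ⊢
    intro h0
    exact hx (by simp [h0])
  have hg_cs : HasCompactSupport g :=
    HasCompactSupport.of_support_subset_isCompact hg0cs
      (hg_supp.trans subset_closure)
  have hg_int : MeasureTheory.Integrable g μ := hg0_int.div_const c
  have hg_total : ∫ q, g q ∂μ = 1 := by
    simp only [hg_def, MeasureTheory.integral_div]
    exact div_self hg0_pos.ne'
  -- Step 6: the convolution functions `h i`.
  set h : Fin n → G → ℝ := fun i p => ∫ q, g (p⁻¹ * q) * k i q ∂μ with hh_def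
  have halt : ∀ i p, h i p = ∫ s, g s * k i (p * s) ∂μ := by
    intro i p
    have key := MeasureTheory.integral_mul_left_eq_self (μ := μ)
      (fun q => g (p⁻¹ * q) * k i q) p
    simp only [hh_def]
    rw [← key]
    congr 1
    ext s
    simp [inv_mul_cancel_left]
  have hint : ∀ (i : Fin n) (p : G),
      MeasureTheory.Integrable (fun s => g s * k i (p * s)) μ := by
    intro i p
    apply Continuous.integrable_of_hasCompactSupport
      (hg_cont.mul ((hk_cont i).comp (continuous_mul_left p)))
    apply HasCompactSupport.of_support_subset_isCompact hg_cs
    intro s hs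
    apply subset_closure
    rcases Function.mem_support.1 hs with hs'
    intro h0
    exact hs' (by simp [h0])
  have hh_nonneg : ∀ i p, 0 ≤ h i p := by
    intro i p
    exact MeasureTheory.integral_nonneg fun q =>
      mul_nonneg (hg_nonneg _) (hk_nonneg i q)
  have hsum_eq : ∀ p, ∑ i, h i p = ∫ s, g s * ∑ i, k i (p * s) ∂μ := by
    intro p
    have hfs := MeasureTheory.integral_finset_sum (μ := μ) Finset.univ
      (fun i _ => hint i p)
    simp only [halt]
    rw [← hfs]
    congr 1
    ext s
    rw [Finset.mul_sum]
  -- the support set of g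
  set S : Set G := tsupport g0 with hS_def
  have hS_comp : IsCompact S := hg0cs
  have hS_W : S ⊆ W := (closure_minimal hg0_supp hm0_closed).trans
    (hm0W.trans interior_subset)
  have hS_Vinv : ∀ i, S⁻¹ ⊆ V i := by
    intro i
    have h1 : S ⊆ (V i)⁻¹ := fun x hx =>
      Set.mem_iInter.1 (hS_W hx).2 i
    intro x hx
    rcases Set.mem_inv.1 hx with hx'
    have := h1 hx'
    rwa [Set.mem_inv, inv_inv] at this
  -- support of h i
  have hh_supp : ∀ i, Function.support (h i) ⊆ m i * S⁻¹ := by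
    intro i p hp
    rw [Function.mem_support] at hp
    by_contra hpm
    apply hp
    have hzero : ∀ q, g (p⁻¹ * q) * k i q = 0 := by
      intro q
      by_contra h0
      have hg' : g (p⁻¹ * q) ≠ 0 := fun hgz => h0 (by simp [hgz])
      have hk' : k i q ≠ 0 := fun hkz => h0 (by simp [hkz])
      have hqm : q ∈ m i := hk_supp i hk'
      have hsS : p⁻¹ * q ∈ S := subset_closure (hg_supp hg')
      apply hpm
      refine ⟨q, hqm, (p⁻¹ * q)⁻¹, Set.inv_mem_inv.2 hsS, ?_⟩
      simp [mul_inv_rev]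
    simp only [hh_def]
    simp [hzero]
  have hD_comp : ∀ i, IsCompact (m i * S⁻¹ : Set G) := fun i =>
    (hm_comp i).mul hS_comp.inv
  have hD_E : ∀ i, (m i * S⁻¹ : Set G) ⊆ E i := fun i =>
    (Set.mul_subset_mul_left (hS_Vinv i)).trans (hV i)
  have hh_tsupp : ∀ i, tsupport (h i) ⊆ E i := by
    intro i
    have : closure (m i * S⁻¹ : Set G) ⊆ E i :=
      (hD_comp i).closure_subset_of_isOpen (hEopen i) (hD_E i)
    exact (closure_mono (hh_supp i)).trans this
  have hh_cs : ∀ i, HasCompactSupport (h i) := fun i =>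
    HasCompactSupport.of_support_subset_isCompact (hD_comp i) (hh_supp i)
  have hh_cont : ∀ i, Continuous (h i) := by
    intro i
    have heq : h i = fun p => ∫ s, g s * k i (p * s) ∂μ := funext (halt i)
    rw [heq]
    apply continuous_iff_continuousAt.2 (fun p₀ => ?_)
    obtain ⟨t, t_comp, ht⟩ := exists_compact_mem_nhds p₀
    have A : ContinuousOn (fun p => ∫ s, g s * k i (p * s) ∂μ) t := by
      apply continuousOn_integral_of_compact_support
        (hg_cs : IsCompact (tsupport g))
      · exact ((hg_cont.comp continuous_snd).mul
          ((hk_cont i).comp (continuous_fst.mul continuous_snd))).continuousOn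
      · intro p s _hp hs
        have hgs : g s = 0 := by
          by_contra h0
          exact hs (subset_tsupport _ h0)
        simp [Function.uncurry, hgs]
    exact A.continuousAt ht
  -- sum bounds
  have hsum_le : ∀ p, ∑ i, h i p ≤ 1 := by
    intro p
    rw [hsum_eq p]
    have hlhs_int : MeasureTheory.Integrable (fun s => g s * ∑ i, k i (p * s)) μ := by
      have : (fun s => g s * ∑ i, k i (p * s)) =
          fun s => ∑ i, g s * k i (p * s) := by
        ext s; rw [Finset.mul_sum]
      rw [this]
      exact MeasureTheory.integrable_finset_sum _ (fun i _ => hint i p)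
    calc (∫ s, g s * ∑ i, k i (p * s) ∂μ) ≤ ∫ s, g s ∂μ := by
          apply MeasureTheory.integral_mono hlhs_int hg_int
          intro s
          calc g s * ∑ i, k i (p * s) ≤ g s * 1 :=
                mul_le_mul_of_nonneg_left (hksum_le_one _) (hg_nonneg s)
            _ = g s := mul_one _
      _ = 1 := hg_total
  have hsum_K : ∀ p ∈ K, ∑ i, h i p = 1 := by
    intro p hp
    rw [hsum_eq p]
    have hptwise : ∀ s, g s * ∑ i, k i (p * s) = g s := by
      intro s
      by_cases hgs : g s = 0
      · simp [hgs]
      · have hsW : s ∈ W := hg0_suppW (hg_supp hgs)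
        have hpsO : p * s ∈ O := hVK (Set.mul_mem_mul hp hsW.1)
        rw [hksum_one _ hpsO, mul_one]
    calc (∫ s, g s * ∑ i, k i (p * s) ∂μ) = ∫ s, g s ∂μ := by
          congr 1; ext s; exact hptwise s
      _ = 1 := hg_total
  -- conclusion
  refine ⟨h, fun i => ⟨hh_cont i, hh_cs i, hh_tsupp i, fun p => hh_nonneg i p⟩,
    fun p => ⟨Finset.sum_nonneg fun i _ => hh_nonneg i p, hsum_le p⟩,
    hsum_K, g, k, hg_cont, hg_cs, hg_nonneg,
    fun i => ⟨hk_cont i, HasCompactSupport.of_support_subset_isCompact (hm_comp i) (hk_supp i),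
      fun q => hk_nonneg i q⟩,
    fun i p => rfl⟩
end
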